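/- Let T be the Tribonacci sequence and ψ the real root of X³−X²−X−1. Then lim_{n→∞} T(n+1)/T(n) = ψ. -/

import Mathlib

def trib : ℕ → ℕ
  | 0 => 0
  | 1 => 1
  | 2 => 1
  | (n+3) => trib (n+2) + trib (n+1) + trib n

lemma trib_pos : ∀ n, 0 < trib (n + 1) := by
  intro n
  induction n using Nat.strong_induction_on with
  | _ n ih =>
    match n with
    | 0 => decide
    | 1 => decide
    | (k+2) =>
      have h1 := ih (k+1) (by omega)
      show 0 < trib (k+2) + trib (k+1) + trib k
      simp only [show k+1+1 = k+2 from rfl] at h1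
      omega

theorem stmt_16 (ψ : ℝ) (hψ : ψ^3 = ψ^2 + ψ + 1) :
    Filter.Tendsto (fun n : ℕ => (trib (n+1) : ℝ) / (trib n : ℝ))
      Filter.atTop (nhds ψ) := by
  have hlo : (11:ℝ)/6 < ψ := by
    nlinarith [sq_nonneg (ψ - 1), sq_nonneg (ψ + 1), sq_nonneg ψ, sq_nonneg (ψ - 2),
      sq_nonneg (ψ + 2), sq_nonneg (ψ - 11/6)]
  have hhi : ψ < (15:ℝ)/8 := by
    nlinarith [sq_nonneg (ψ - 1), sq_nonneg (ψ + 1), sq_nonneg ψ, sq_nonneg (ψ - 2),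
      sq_nonneg (ψ + 2), sq_nonneg (ψ - 15/8)]
  set p : ℝ := ψ - 1 with hp
  set q : ℝ := ψ^2 - ψ - 1 with hq
  have hq0 : 0 < q := by rw [hq]; nlinarith
  have hq1 : q < 1 := by rw [hq]; nlinarith
  have hd : 0 < 4*q - p^2 := by rw [hq, hp]; nlinarith
  set y : ℕ → ℝ := fun n => (trib (n+1) : ℝ) - ψ * trib n with hy
  have hyrec : ∀ n, y (n+2) = -p * y (n+1) - q * y n := by
    intro n
    have hrec : (trib (n+3) : ℝ) = (trib (n+2) : ℝ) + trib (n+1) + trib n := by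
      norm_cast
    simp only [hy, hp, hq]
    rw [show n+2+1 = n+3 from rfl, hrec]
    linear_combination (-(trib n : ℝ)) * hψ
  set Q : ℕ → ℝ := fun n => (y (n+1))^2 + p * y (n+1) * y n + q * (y n)^2 with hQdef
  have hQrec : ∀ n, Q (n+1) = q * Q n := by
    intro n
    simp only [hQdef]
    rw [show n+1+1 = n+2 from rfl, hyrec n]
    ring
  have hQ : ∀ n, Q n = q^n * Q 0 := by
    intro n
    induction n with
    | zero => simp
    | succ k ih => rw [hQrec k, ih, pow_succ]; ring
  have hQ0 : 0 ≤ Q 0 := by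
    have h4 : 4 * Q 0 = (2 * y 1 + p * y 0)^2 + (4*q - p^2) * (y 0)^2 := by
      simp only [hQdef]; ring
    nlinarith [sq_nonneg (2 * y 1 + p * y 0), sq_nonneg (y 0)]
  set C : ℝ := 4*q*Q 0/(4*q-p^2) with hC
  have hbound : ∀ n, (y (n+1))^2 ≤ C * q^n := by
    intro n
    have key : (4*q - p^2) * (y (n+1))^2 ≤ (4*q*Q 0) * q^n := by
      have h1 := hQ n
      have expand : 4*q*(q^n*Q 0) = (p*y (n+1)+2*q*y n)^2 + (4*q-p^2)*(y (n+1))^2 := by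
        rw [← h1]; simp only [hQdef]; ring
      nlinarith [sq_nonneg (p * y (n+1) + 2*q*y n)]
    rw [hC, div_mul_eq_mul_div, le_div_iff₀ hd]
    nlinarith
  have hsq : Filter.Tendsto (fun n => (y (n+1))^2) Filter.atTop (nhds 0) := by
    have hC0 : Filter.Tendsto (fun n : ℕ => C * q^n) Filter.atTop (nhds 0) := by
      have := (tendsto_pow_atTop_nhds_zero_of_lt_one hq0.le hq1).const_mul C
      simpa using this
    exact squeeze_zero (fun n => sq_nonneg _) hbound hC0
  have habs : Filter.Tendsto (fun n => |y (n+1)|) Filter.atTop (nhds 0) := by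
    have h := (Real.continuous_sqrt.tendsto 0).comp hsq
    simpa [Function.comp_def, Real.sqrt_sq_eq_abs] using h
  have hy1 : Filter.Tendsto (fun n => y (n+1)) Filter.atTop (nhds 0) := by
    apply squeeze_zero_norm _ habs
    intro n
    simp [Real.norm_eq_abs]
  have hy0 : Filter.Tendsto y Filter.atTop (nhds 0) :=
    (Filter.tendsto_add_atTop_iff_nat 1).mp hy1
  have htrib1 : ∀ n : ℕ, 1 ≤ n → (1:ℝ) ≤ (trib n : ℝ) := by
    intro n hn
    obtain ⟨k, rfl⟩ := Nat.exists_eq_add_of_le hn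
    have := trib_pos k
    exact_mod_cast by
      have : 1 ≤ trib (1 + k) := by rw [Nat.add_comm]; omega
      exact_mod_cast this
  have habs0 : Filter.Tendsto (fun n => |y n|) Filter.atTop (nhds 0) := by
    have := hy0.abs
    simpa using this
  have hyT : Filter.Tendsto (fun n => y n / (trib n : ℝ)) Filter.atTop (nhds 0) := by
    refine squeeze_zero_norm' ?_ habs0
    filter_upwards [Filter.eventually_ge_atTop 1] with n hn
    have h1 : (1:ℝ) ≤ (trib n : ℝ) := htrib1 n hn
    rw [Real.norm_eq_abs, abs_div, abs_of_nonneg (by linarith : (0:ℝ) ≤ (trib n : ℝ))]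
    exact div_le_self (abs_nonneg _) h1
  have hmain : Filter.Tendsto (fun n : ℕ => ψ + y n / (trib n : ℝ)) Filter.atTop (nhds ψ) := by
    have := (tendsto_const_nhds (x := ψ) (f := Filter.atTop (α := ℕ))).add hyT
    simpa using this
  apply hmain.congr'
  filter_upwards [Filter.eventually_ge_atTop 1] with n hn
  have h1 : (1:ℝ) ≤ (trib n : ℝ) := htrib1 n hn
  have hne : (trib n : ℝ) ≠ 0 := by linarith
  field_simp [hy]
  simp only [hy]; ring
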